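/- (MacMahon Master Theorem) Let A ∈ M_n(ℂ) and let x = (x₁,...,xₙ) be commuting indeterminates. For each multi-index α ∈ ℕ₀ⁿ, the coefficient of x^α in ∏_{i=1}^n ((Ax)_i)^{α_i} equals the coefficient of x^α in the power series expansion of det(I − Δ(x)A)^{−1}, where Δ(x) = diag(x₁,...,xₙ). -/

import Mathlib

open MvPolynomial Finset

namespace MacMahon

variable {R : Type*} [CommRing R] {m : ℕ}

noncomputable def row (M : Matrix (Fin m) (Fin m) R) (i : Fin m) : MvPolynomial (Fin m) R :=
  ∑ l, C (M i l) * X l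

noncomputable def PP (M : Matrix (Fin m) (Fin m) R) (α : Fin m →₀ ℕ) : MvPolynomial (Fin m) R :=
  ∏ i, (row M i) ^ (α i)

noncomputable def G (M : Matrix (Fin m) (Fin m) R) (α : Fin m →₀ ℕ) : R := coeff α (PP M α)

noncomputable def H (j : ℕ) (M : Matrix (Fin m) (Fin m) R) : R :=
  ∑ α ∈ (univ : Finset (Fin m)).finsuppAntidiag j, G M α

noncomputable def phi (M : Matrix (Fin m) (Fin m) R) :
    MvPolynomial (Fin m) R →ₐ[R] MvPolynomial (Fin m) R := aeval (row M)

lemma phi_X (M : Matrix (Fin m) (Fin m) R) (i : Fin m) : phi M (X i) = row M i :=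
  aeval_X _ _

lemma phi_C (M : Matrix (Fin m) (Fin m) R) (c : R) : phi M (C c) = C c := by
  rw [phi, aeval_C, algebraMap_eq]

lemma phi_monomial (M : Matrix (Fin m) (Fin m) R) (α : Fin m →₀ ℕ) :
    phi M (monomial α 1) = PP M α := by
  rw [phi, aeval_monomial, map_one, one_mul, PP, Finsupp.prod_pow]

lemma phi_row (M N : Matrix (Fin m) (Fin m) R) (i : Fin m) :
    phi N (row M i) = row (M * N) i := by
  rw [row, map_sum]
  have : ∀ l, phi N (C (M i l) * X l) = ∑ k, C (M i l * N l k) * X k := by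
    intro l
    rw [map_mul, phi, aeval_X, aeval_C, algebraMap_eq, row, Finset.mul_sum]
    simp [C_mul, mul_assoc]
  simp_rw [this]
  rw [Finset.sum_comm, row]
  congr 1
  ext k
  rw [Matrix.mul_apply, map_sum (C : R →+* MvPolynomial (Fin m) R), Finset.sum_mul]

lemma phi_comp (M N : Matrix (Fin m) (Fin m) R) :
    phi (M * N) = (phi N).comp (phi M) := by
  apply MvPolynomial.algHom_ext
  intro i
  rw [AlgHom.comp_apply, phi_X, phi_X, phi_row]

lemma row_one (i : Fin m) : row (1 : Matrix (Fin m) (Fin m) R) i = X i := by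
  rw [row]
  rw [Finset.sum_eq_single i]
  · simp [Matrix.one_apply]
  · intro l _ hl
    simp [Matrix.one_apply, Ne.symm hl]
  · simp

lemma phi_one : phi (1 : Matrix (Fin m) (Fin m) R) = AlgHom.id R _ := by
  apply MvPolynomial.algHom_ext
  intro i
  rw [phi, aeval_X, row_one, AlgHom.id_apply]

lemma row_homog (M : Matrix (Fin m) (Fin m) R) (i : Fin m) : (row M i).IsHomogeneous 1 :=
  IsHomogeneous.sum _ _ _ fun l _ => (isHomogeneous_X _ _).C_mul _

lemma PP_homog (M : Matrix (Fin m) (Fin m) R) (α : Fin m →₀ ℕ) :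
    (PP M α).IsHomogeneous (∑ i, α i) := by
  have := IsHomogeneous.prod (univ : Finset (Fin m)) (fun i => (row M i) ^ (α i)) (fun i => α i)
    (fun i _ => by simpa using (row_homog M i).pow (α i))
  exact this

lemma degree_eq_sum (β : Fin m →₀ ℕ) : β.degree = ∑ i, β i := by
  rw [Finsupp.degree]
  exact Finset.sum_subset (Finset.subset_univ _) (by simp [Finsupp.notMem_support_iff])

lemma support_PP_subset (M : Matrix (Fin m) (Fin m) R) {j : ℕ} {α : Fin m →₀ ℕ}
    (hα : ∑ i, α i = j) :
    (PP M α).support ⊆ (univ : Finset (Fin m)).finsuppAntidiag j := by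
  intro β hβ
  rw [mem_finsuppAntidiag]
  refine ⟨?_, Finset.subset_univ _⟩
  by_contra hne
  exact (mem_support_iff.1 hβ) ((PP_homog M α).coeff_eq_zero (by
    rw [degree_eq_sum]
    intro hc
    exact hne (by rw [hc, hα])))

noncomputable def Phi (j : ℕ) (M : Matrix (Fin m) (Fin m) R) :
    Matrix ((univ : Finset (Fin m)).finsuppAntidiag j) ((univ : Finset (Fin m)).finsuppAntidiag j) R :=
  fun α β => coeff β.1 (phi M (monomial α.1 1))

lemma trace_Phi (j : ℕ) (M : Matrix (Fin m) (Fin m) R) : Matrix.trace (Phi j M) = H j M := by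
  rw [Matrix.trace, H]
  rw [← Finset.sum_coe_sort ((univ : Finset (Fin m)).finsuppAntidiag j) (fun α => G M α)]
  congr 1
  ext α
  rw [Matrix.diag, Phi, phi_monomial, G]

lemma Phi_one (j : ℕ) : Phi j (1 : Matrix (Fin m) (Fin m) R) = 1 := by
  ext α β
  rw [Phi, phi_one, AlgHom.id_apply, coeff_monomial, Matrix.one_apply]
  by_cases h : α = β
  · simp [h]
  · have : α.1 ≠ β.1 := fun hc => h (Subtype.ext hc)
    simp [h, this]

lemma Phi_mul (j : ℕ) (M N : Matrix (Fin m) (Fin m) R) :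
    Phi j (M * N) = Phi j M * Phi j N := by
  ext α γ
  rw [Matrix.mul_apply, Phi, phi_comp, AlgHom.comp_apply]
  have hsum : ∑ i, (α.1 : Fin m →₀ ℕ) i = j := by
    have := α.2
    rw [mem_finsuppAntidiag] at this
    exact this.1
  have hp : phi M (monomial α.1 1) = ∑ β ∈ (PP M α.1).support, monomial β (coeff β (PP M α.1)) := by
    rw [phi_monomial]; exact (as_sum _)
  rw [hp, map_sum]
  have : ∀ β, phi N (monomial β (coeff β (PP M α.1))) =
      C (coeff β (PP M α.1)) * phi N (monomial β 1) := by
    intro β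
    have h1 : (monomial β (coeff β (PP M α.1)) : MvPolynomial (Fin m) R) =
        C (coeff β (PP M α.1)) * monomial β 1 := by rw [C_mul_monomial, mul_one]
    rw [h1, map_mul, phi_C]
  simp_rw [this]
  rw [MvPolynomial.coeff_sum]
  simp_rw [coeff_C_mul]
  rw [Finset.sum_subset (support_PP_subset M hsum)
    (fun β _ hβ => by rw [notMem_support_iff.1 hβ, zero_mul])]
  rw [← Finset.sum_coe_sort ((univ : Finset (Fin m)).finsuppAntidiag j)]
  congr 1
  ext β
  rw [Phi, Phi, phi_monomial, phi_monomial]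

lemma H_conj {k : Type*} [Field k] (j : ℕ) (Q N : Matrix (Fin m) (Fin m) k)
    (hQ : IsUnit Q.det) : H j (Q * N * Q⁻¹) = H j N := by
  rw [← trace_Phi, ← trace_Phi, Phi_mul, Phi_mul, Matrix.trace_mul_cycle, ← Phi_mul,
    Matrix.nonsing_inv_mul Q hQ, Phi_one, Matrix.one_mul]


/-! ### Power series side -/

noncomputable def PD (M : Matrix (Fin m) (Fin m) R) : PowerSeries R :=
  Matrix.det (1 - (PowerSeries.X : PowerSeries R) • M.map (PowerSeries.C))

noncomputable def FH (M : Matrix (Fin m) (Fin m) R) : PowerSeries R :=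
  PowerSeries.mk fun j => H j M

lemma coeff_FH (M : Matrix (Fin m) (Fin m) R) (j : ℕ) :
    PowerSeries.coeff j (FH M) = H j M := PowerSeries.coeff_mk _ _

lemma coeff_linear_pow {S : Type*} [CommRing S] (r s : S) (a : ℕ) :
    ((Polynomial.C r * Polynomial.X + Polynomial.C s) ^ a).coeff a = r ^ a := by
  induction a with
  | zero => simp
  | succ a ih =>
    have hdeg : ((Polynomial.C r * Polynomial.X + Polynomial.C s) ^ a).natDegree ≤ a := by
      refine le_trans (Polynomial.natDegree_pow_le) ?_
      have : (Polynomial.C r * Polynomial.X + Polynomial.C s).natDegree ≤ 1 := by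
        refine le_trans (Polynomial.natDegree_add_le _ _) ?_
        simp only [Polynomial.natDegree_C, max_le_iff, Nat.zero_le, and_true]
        exact le_trans (Polynomial.natDegree_mul_le)
          (by simp [Polynomial.natDegree_C, Polynomial.natDegree_X_le])
      calc a * (Polynomial.C r * Polynomial.X + Polynomial.C s).natDegree ≤ a * 1 :=
            Nat.mul_le_mul_left a this
        _ = a := by ring
    rw [pow_succ, mul_add, Polynomial.coeff_add]
    rw [show (Polynomial.C r * Polynomial.X + Polynomial.C s) ^ a * (Polynomial.C r * Polynomial.X)
        = (Polynomial.C r * Polynomial.X + Polynomial.C s) ^ a * Polynomial.C r * Polynomial.X by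
        ring]
    rw [Polynomial.coeff_mul_X, Polynomial.coeff_mul_C, ih, Polynomial.coeff_mul_C,
      Polynomial.coeff_eq_zero_of_natDegree_lt (lt_of_le_of_lt hdeg (Nat.lt_succ_self a)),
      zero_mul, add_zero, pow_succ]

lemma fse_C {k : Type*} [CommRing k] (c : k) :
    finSuccEquiv k m (C c) = Polynomial.C (C c) := by
  simp [finSuccEquiv_apply]

section Block

variable {k : Type*} [CommRing k] (N : Matrix (Fin (m + 1)) (Fin (m + 1)) k) (μ : k)

lemma G_col (hcol : ∀ i, N i 0 = if i = 0 then μ else 0) (α : Fin (m + 1) →₀ ℕ) :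
    G N α = μ ^ (α 0) * G (N.submatrix Fin.succ Fin.succ) (Finsupp.tail α) := by
  set B := N.submatrix Fin.succ Fin.succ with hB
  set u : MvPolynomial (Fin m) k := ∑ l, C (N 0 l.succ) * X l with hu
  have hrow0 : finSuccEquiv k m (row N 0) =
      Polynomial.C (C μ) * Polynomial.X + Polynomial.C u := by
    rw [row, map_sum, Fin.sum_univ_succ, map_mul, fse_C, finSuccEquiv_X_zero, hcol 0, if_pos rfl]
    congr 1
    rw [hu, map_sum (Polynomial.C : MvPolynomial (Fin m) k →+* _)]
    apply Finset.sum_congr rfl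
    intro l _
    rw [map_mul, fse_C, finSuccEquiv_X_succ, ← Polynomial.C_mul]
  have hrowsucc : ∀ i : Fin m, finSuccEquiv k m (row N i.succ) = Polynomial.C (row B i) := by
    intro i
    rw [row, map_sum, Fin.sum_univ_succ, hcol i.succ, if_neg (Fin.succ_ne_zero i)]
    simp only [map_mul, fse_C, finSuccEquiv_X_zero, finSuccEquiv_X_succ, C_0, map_zero,
      zero_mul, zero_add]
    rw [row, map_sum (Polynomial.C : MvPolynomial (Fin m) k →+* _)]
    apply Finset.sum_congr rfl
    intro l _
    rw [← Polynomial.C_mul, hB, Matrix.submatrix_apply]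
  have hPP : finSuccEquiv k m (PP N α) =
      (Polynomial.C (C μ) * Polynomial.X + Polynomial.C u) ^ (α 0) *
        Polynomial.C (PP B (Finsupp.tail α)) := by
    rw [PP, map_prod, Fin.prod_univ_succ, map_pow, hrow0]
    congr 1
    rw [PP]
    simp_rw [map_pow]
    simp_rw [hrowsucc]
    simp_rw [← map_pow]
    simp_rw [Finsupp.tail_apply]
    rw [← map_prod (Polynomial.C : MvPolynomial (Fin m) k →+* _)]
  have hα : Finsupp.cons (α 0) (Finsupp.tail α) = α := Finsupp.cons_tail α
  rw [G]
  rw [show coeff α (PP N α) = coeff (Finsupp.cons (α 0) (Finsupp.tail α)) (PP N α) from by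
    rw [hα]]
  rw [← finSuccEquiv_coeff_coeff, hPP, Polynomial.coeff_mul_C, coeff_linear_pow, ← C_pow,
    coeff_C_mul, G]

lemma H_block (hcol : ∀ i, N i 0 = if i = 0 then μ else 0) (j : ℕ) :
    H j N = ∑ p ∈ Finset.HasAntidiagonal.antidiagonal j, μ ^ p.1 * H p.2 (N.submatrix Fin.succ Fin.succ) := by
  set B := N.submatrix Fin.succ Fin.succ with hB
  rw [H]
  simp_rw [G_col N μ hcol]
  have : ∀ p : ℕ × ℕ, μ ^ p.1 * H p.2 B =
      ∑ α' ∈ (univ : Finset (Fin m)).finsuppAntidiag p.2, μ ^ p.1 * G B α' := by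
    intro p; rw [H, Finset.mul_sum]
  simp_rw [this]
  rw [Finset.sum_sigma']
  refine Finset.sum_bij' (fun α _ => ⟨(α 0, ∑ i, Finsupp.tail α i), Finsupp.tail α⟩)
    (fun p _ => Finsupp.cons p.1.1 p.2) ?_ ?_ ?_ ?_ ?_
  · intro α hα
    rw [mem_finsuppAntidiag] at hα
    rw [Finset.mem_sigma, Finset.HasAntidiagonal.mem_antidiagonal, mem_finsuppAntidiag]
    refine ⟨?_, rfl, Finset.subset_univ _⟩
    show α 0 + ∑ i, Finsupp.tail α i = j
    simp_rw [Finsupp.tail_apply]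
    have h := hα.1
    rw [show Finset.univ.sum ⇑α = ∑ i, α i from rfl, Fin.sum_univ_succ] at h
    exact h
  · intro p hp
    rw [Finset.mem_sigma, Finset.HasAntidiagonal.mem_antidiagonal, mem_finsuppAntidiag] at hp
    rw [mem_finsuppAntidiag]
    refine ⟨?_, Finset.subset_univ _⟩
    rw [Fin.sum_univ_succ, Finsupp.cons_zero]
    have : ∀ i : Fin m, (Finsupp.cons p.1.1 p.2 : Fin (m+1) →₀ ℕ) i.succ = p.2 i := fun i =>
      Finsupp.cons_succ _ _ _
    rw [Finset.sum_congr rfl fun i _ => this i, hp.2.1, hp.1]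
  · intro α _
    exact Finsupp.cons_tail α
  · intro p hp
    rw [Finset.mem_sigma, Finset.HasAntidiagonal.mem_antidiagonal, mem_finsuppAntidiag] at hp
    obtain ⟨⟨a, b⟩, α'⟩ := p
    simp only [Finsupp.cons_zero, Finsupp.tail_cons]
    have hb : (∑ i, α' i) = b := hp.2.1
    rw [hb]
  · intro α _
    rfl

lemma FH_block (hcol : ∀ i, N i 0 = if i = 0 then μ else 0) :
    FH N = PowerSeries.mk (fun a => μ ^ a) * FH (N.submatrix Fin.succ Fin.succ) := by
  ext j
  rw [coeff_FH, PowerSeries.coeff_mul, H_block N μ hcol]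
  apply Finset.sum_congr rfl
  intro p _
  rw [PowerSeries.coeff_mk, coeff_FH]

lemma PD_block (hcol : ∀ i, N i 0 = if i = 0 then μ else 0) :
    PD N = (1 - PowerSeries.C μ * PowerSeries.X) * PD (N.submatrix Fin.succ Fin.succ) := by
  rw [PD, Matrix.det_succ_column_zero]
  rw [Finset.sum_eq_single 0]
  · rw [Fin.succAbove_zero]
    have hentry : (1 - (PowerSeries.X : PowerSeries k) • N.map (PowerSeries.C)) 0 0
        = 1 - PowerSeries.C μ * PowerSeries.X := by
      simp [Matrix.one_apply, hcol 0, mul_comm]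
    have hsub : (1 - (PowerSeries.X : PowerSeries k) • N.map (PowerSeries.C)).submatrix
        Fin.succ Fin.succ
        = 1 - (PowerSeries.X : PowerSeries k) •
            (N.submatrix Fin.succ Fin.succ).map (PowerSeries.C) := by
      ext i j
      simp [Matrix.one_apply, Fin.succ_inj]
    rw [hentry, hsub, PD]
    simp
  · intro i _ hi
    have : (1 - (PowerSeries.X : PowerSeries k) • N.map (PowerSeries.C)) i 0 = 0 := by
      simp [Matrix.one_apply, hi, hcol i]
    rw [this]
    ring
  · simp

end Block

lemma geom_mul {k : Type*} [CommRing k] (μ : k) :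
    (1 - PowerSeries.C μ * PowerSeries.X) * PowerSeries.mk (fun a => μ ^ a) = 1 := by
  ext j
  rw [sub_mul, one_mul, map_sub]
  rw [show (PowerSeries.C μ * PowerSeries.X) * PowerSeries.mk (fun a => μ ^ a)
      = PowerSeries.C μ * (PowerSeries.X * PowerSeries.mk (fun a => μ ^ a)) by ring]
  cases j with
  | zero => simp
  | succ j =>
    rw [PowerSeries.coeff_mk, PowerSeries.coeff_C_mul, PowerSeries.coeff_succ_X_mul,
      PowerSeries.coeff_mk, PowerSeries.coeff_one]
    simp [pow_succ, mul_comm]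

lemma PD_conj {k : Type*} [Field k] (Q N : Matrix (Fin m) (Fin m) k) (hQ : IsUnit Q.det) :
    PD (Q * N * Q⁻¹) = PD N := by
  have hQQ : Q * Q⁻¹ = 1 := Matrix.mul_nonsing_inv Q hQ
  have e1 : (Q * N * Q⁻¹).map (PowerSeries.C) =
      Q.map (PowerSeries.C) * N.map (PowerSeries.C) * Q⁻¹.map (PowerSeries.C) := by
    rw [Matrix.map_mul, Matrix.map_mul]
  have e2 : Q.map (PowerSeries.C) * Q⁻¹.map (PowerSeries.C) = 1 := by
    rw [← Matrix.map_mul, hQQ, Matrix.map_one _ (map_zero _) (map_one _)]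
  have key : (1 : Matrix (Fin m) (Fin m) (PowerSeries k)) -
      (PowerSeries.X : PowerSeries k) • (Q * N * Q⁻¹).map (PowerSeries.C)
      = Q.map (PowerSeries.C) *
          (1 - (PowerSeries.X : PowerSeries k) • N.map (PowerSeries.C)) *
          Q⁻¹.map (PowerSeries.C) := by
    rw [Matrix.mul_sub, Matrix.mul_one, Matrix.mul_smul, Matrix.sub_mul, Matrix.smul_mul, e2, e1]
  rw [PD, PD, key, Matrix.det_mul, Matrix.det_mul, mul_right_comm, ← Matrix.det_mul, e2,
    Matrix.det_one, one_mul]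



lemma FH_conj {k : Type*} [Field k] (Q N : Matrix (Fin m) (Fin m) k) (hQ : IsUnit Q.det) :
    FH (Q * N * Q⁻¹) = FH N := by
  ext j
  rw [coeff_FH, coeff_FH, H_conj j Q N hQ]

lemma H_zero (M : Matrix (Fin m) (Fin m) R) : H 0 M = 1 := by
  have hset : (univ : Finset (Fin m)).finsuppAntidiag 0 = {0} := by
    ext α
    rw [mem_finsuppAntidiag, Finset.mem_singleton]
    constructor
    · rintro ⟨h1, -⟩
      ext i
      exact Finset.sum_eq_zero_iff.mp h1 i (Finset.mem_univ i)
    · rintro rfl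
      exact ⟨by simp, by simp⟩
  rw [H, hset, Finset.sum_singleton, G]
  have hPP : PP M (0 : Fin m →₀ ℕ) = 1 := by
    rw [PP]; simp
  rw [hPP]
  simp

theorem stepA : ∀ (m : ℕ) (M : Matrix (Fin m) (Fin m) ℂ), PD M * FH M = 1 := by
  intro m
  induction m with
  | zero =>
    intro M
    have h1 : PD M = 1 := by rw [PD, Matrix.det_fin_zero]
    have h2 : FH M = 1 := by
      ext j
      rw [coeff_FH, PowerSeries.coeff_one]
      cases j with
      | zero => simp [H_zero]
      | succ j =>
        have hempty : (univ : Finset (Fin 0)).finsuppAntidiag (j + 1) = ∅ := by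
          ext α
          simp only [mem_finsuppAntidiag, Finset.notMem_empty, iff_false, not_and]
          intro hsum
          rw [Subsingleton.elim α 0] at hsum
          simp at hsum
        rw [H, hempty, Finset.sum_empty]
        simp
    rw [h1, h2, one_mul]
  | succ m ih =>
    intro M
    obtain ⟨μ, hμ⟩ := Module.End.exists_eigenvalue (Matrix.toLin' M)
    obtain ⟨v, hv⟩ := hμ.exists_hasEigenvector
    have hMv : M.mulVec v = μ • v := by
      have := hv.apply_eq_smul
      rwa [Matrix.toLin'_apply] at this
    obtain ⟨i₀, hi₀⟩ : ∃ i, v i ≠ 0 := by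
      by_contra h
      push_neg at h
      exact hv.2 (funext h)
    set σ : Equiv.Perm (Fin (m + 1)) := Equiv.swap 0 i₀ with hσ
    set Q₁ : Matrix (Fin (m + 1)) (Fin (m + 1)) ℂ :=
      fun p q => if q = 0 then v (σ p) else if p = q then 1 else 0 with hQ₁
    set Q : Matrix (Fin (m + 1)) (Fin (m + 1)) ℂ := Q₁.submatrix σ id with hQdef
    have hdetQ₁ : Q₁.det = v i₀ := by
      rw [Matrix.det_succ_row_zero, Finset.sum_eq_single 0]
      · have h00 : Q₁ 0 0 = v i₀ := by
          rw [hQ₁]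
          simp [hσ, Equiv.swap_apply_left]
        have hsub : Q₁.submatrix Fin.succ ((0 : Fin (m + 1)).succAbove) = 1 := by
          rw [Fin.succAbove_zero]
          ext p q
          rw [Matrix.submatrix_apply]
          simp only [Matrix.submatrix_apply, hQ₁, Matrix.one_apply]
          simp [Fin.succ_ne_zero, Fin.succ_inj]
        rw [h00, hsub, Matrix.det_one]
        simp
      · intro q _ hq
        have : Q₁ 0 q = 0 := by
          rw [hQ₁]
          simp only
          rw [if_neg hq, if_neg (fun h => hq h.symm)]
        rw [this]
        ring
      · simp
    have hdetQ : Q.det = (Equiv.Perm.sign σ : ℂ) * v i₀ := by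
      rw [hQdef, Matrix.det_permute, hdetQ₁]
    have hQ : IsUnit Q.det := by
      rw [hdetQ, isUnit_iff_ne_zero]
      apply mul_ne_zero _ hi₀
      rcases Int.units_eq_one_or (Equiv.Perm.sign σ) with h | h <;> simp [h]
    have hQcol : ∀ p, Q p 0 = v p := by
      intro p
      rw [hQdef]
      rw [Matrix.submatrix_apply]
      simp only [Matrix.submatrix_apply, id_eq, hQ₁, if_pos rfl]
      rw [hσ, Equiv.swap_apply_self]
    set N : Matrix (Fin (m + 1)) (Fin (m + 1)) ℂ := Q⁻¹ * M * Q with hNdef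
    have hM : Q * N * Q⁻¹ = M := by
      rw [hNdef]
      simp only [← Matrix.mul_assoc]
      rw [Matrix.mul_nonsing_inv _ hQ, Matrix.one_mul, Matrix.mul_assoc,
        Matrix.mul_nonsing_inv _ hQ, Matrix.mul_one]
    have he0 : Q.mulVec (Pi.single 0 1) = v := by
      rw [Matrix.mulVec_single_one]
      ext p
      exact hQcol p
    have hNe0 : N.mulVec (Pi.single 0 1) = μ • (Pi.single 0 1 : Fin (m + 1) → ℂ) := by
      rw [hNdef, ← Matrix.mulVec_mulVec, ← Matrix.mulVec_mulVec, he0, hMv,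
        Matrix.mulVec_smul, ← he0, Matrix.mulVec_mulVec, Matrix.nonsing_inv_mul _ hQ,
        Matrix.one_mulVec]
    have hcol : ∀ i, N i 0 = if i = 0 then μ else 0 := by
      intro i
      have h1 : N.mulVec (Pi.single 0 1) i = (μ • (Pi.single 0 1 : Fin (m + 1) → ℂ)) i := by
        rw [hNe0]
      rw [Matrix.mulVec_single_one] at h1
      rw [Matrix.col_apply] at h1
      rw [h1]
      simp only [Pi.smul_apply, Pi.single_apply, smul_eq_mul]
      split_ifs <;> simp
    set B : Matrix (Fin m) (Fin m) ℂ := N.submatrix Fin.succ Fin.succ with hBdef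
    calc PD M * FH M = PD N * FH N := by
          rw [← hM, PD_conj _ _ hQ, FH_conj _ _ hQ]
      _ = ((1 - PowerSeries.C μ * PowerSeries.X) * (PowerSeries.mk fun a => μ ^ a)) *
            (PD B * FH B) := by
          rw [PD_block N μ hcol, FH_block N μ hcol, ← hBdef]
          ring
      _ = 1 := by rw [geom_mul, ih B, one_mul]


noncomputable def cc (j : ℕ) (M : Matrix (Fin m) (Fin m) R) : R := PowerSeries.coeff j (PD M)

lemma stepA_coeff (m : ℕ) (M : Matrix (Fin m) (Fin m) ℂ) (j : ℕ) :
    ∑ p ∈ Finset.HasAntidiagonal.antidiagonal j, H p.1 M * cc p.2 M = if j = 0 then 1 else 0 := by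
  have h1 : FH M * PD M = 1 := by rw [mul_comm]; exact stepA m M
  have h2 := congrArg (PowerSeries.coeff j) h1
  rw [PowerSeries.coeff_mul, PowerSeries.coeff_one] at h2
  simpa [cc, coeff_FH] using h2

section Maps

variable {S : Type*} [CommRing S] (f : R →+* S)

lemma map_row (M : Matrix (Fin m) (Fin m) R) (i : Fin m) :
    MvPolynomial.map f (row M i) = row (M.map f) i := by
  rw [row, row, map_sum (MvPolynomial.map f)]
  apply Finset.sum_congr rfl
  intro l _
  rw [map_mul, map_C, map_X, Matrix.map_apply]

lemma map_PP (M : Matrix (Fin m) (Fin m) R) (α : Fin m →₀ ℕ) :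
    MvPolynomial.map f (PP M α) = PP (M.map f) α := by
  rw [PP, PP, map_prod (MvPolynomial.map f)]
  apply Finset.prod_congr rfl
  intro i _
  rw [map_pow, map_row]

lemma G_map (M : Matrix (Fin m) (Fin m) R) (α : Fin m →₀ ℕ) :
    G (M.map f) α = f (G M α) := by
  rw [G, G, ← map_PP, coeff_map]

lemma H_map (j : ℕ) (M : Matrix (Fin m) (Fin m) R) : H j (M.map f) = f (H j M) := by
  rw [H, H, map_sum f]
  exact Finset.sum_congr rfl fun α _ => G_map f M α

lemma PD_map (M : Matrix (Fin m) (Fin m) R) : PD (M.map f) = PowerSeries.map f (PD M) := by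
  rw [PD, PD, RingHom.map_det, RingHom.mapMatrix_apply]
  congr 1
  apply Matrix.ext
  intro i j
  simp [Matrix.one_apply, apply_ite (PowerSeries.map f)]

lemma cc_map (j : ℕ) (M : Matrix (Fin m) (Fin m) R) : cc j (M.map f) = f (cc j M) := by
  rw [cc, cc, PD_map, PowerSeries.coeff_map]

end Maps

theorem key_gen (n : ℕ) (j : ℕ) :
    ∑ p ∈ Finset.HasAntidiagonal.antidiagonal j,
        H p.1 (Matrix.of fun i k => (X (i, k) : MvPolynomial (Fin n × Fin n) ℂ)) *
          cc p.2 (Matrix.of fun i k => (X (i, k) : MvPolynomial (Fin n × Fin n) ℂ))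
      = if j = 0 then 1 else 0 := by
  set Y : Matrix (Fin n) (Fin n) (MvPolynomial (Fin n × Fin n) ℂ) :=
    Matrix.of fun i k => (X (i, k) : MvPolynomial (Fin n × Fin n) ℂ) with hY
  apply MvPolynomial.funext
  intro x
  rw [map_sum (eval x : MvPolynomial (Fin n × Fin n) ℂ →+* ℂ)]
  have hterm : ∀ p : ℕ × ℕ, (eval x) (H p.1 Y * cc p.2 Y) =
      H p.1 (Y.map (eval x)) * cc p.2 (Y.map (eval x)) := by
    intro p
    rw [map_mul, H_map, cc_map]
  simp_rw [hterm]
  rw [stepA_coeff n (Y.map (eval x)) j]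
  split_ifs <;> simp

theorem key_spec (n : ℕ) (A : Matrix (Fin n) (Fin n) ℂ) (j : ℕ) :
    ∑ p ∈ Finset.HasAntidiagonal.antidiagonal j,
        H p.1 (Matrix.diagonal (fun i => (X i : MvPolynomial (Fin n) ℂ)) * A.map C) *
          cc p.2 (Matrix.diagonal (fun i => (X i : MvPolynomial (Fin n) ℂ)) * A.map C)
      = if j = 0 then 1 else 0 := by
  set ψ : MvPolynomial (Fin n × Fin n) ℂ →+* MvPolynomial (Fin n) ℂ :=
    (aeval fun p : Fin n × Fin n => (X p.1 * C (A p.1 p.2) : MvPolynomial (Fin n) ℂ)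
      : MvPolynomial (Fin n × Fin n) ℂ →ₐ[ℂ] MvPolynomial (Fin n) ℂ).toRingHom with hψ
  have hYmap : (Matrix.of fun i k => (X (i, k) : MvPolynomial (Fin n × Fin n) ℂ)).map ψ =
      Matrix.diagonal (fun i => (X i : MvPolynomial (Fin n) ℂ)) * A.map C := by
    ext i k
    rw [Matrix.map_apply, Matrix.of_apply, hψ]
    simp only [AlgHom.toRingHom_eq_coe, RingHom.coe_coe, aeval_X]
    rw [Matrix.mul_apply]
    rw [Finset.sum_eq_single i]
    · rw [Matrix.diagonal_apply_eq, Matrix.map_apply]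
    · intro b _ hb
      rw [Matrix.diagonal_apply_ne' _ hb, zero_mul]
    · simp
  have h := congrArg ψ (key_gen n j)
  rw [map_sum ψ] at h
  have hterm : ∀ p : ℕ × ℕ, ψ (H p.1 (Matrix.of fun i k => (X (i, k) :
      MvPolynomial (Fin n × Fin n) ℂ)) * cc p.2 (Matrix.of fun i k => (X (i, k) :
      MvPolynomial (Fin n × Fin n) ℂ))) =
      H p.1 (Matrix.diagonal (fun i => (X i : MvPolynomial (Fin n) ℂ)) * A.map C) *
        cc p.2 (Matrix.diagonal (fun i => (X i : MvPolynomial (Fin n) ℂ)) * A.map C) := by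
    intro p
    rw [map_mul, ← hYmap, H_map, cc_map]
  rw [Finset.sum_congr rfl fun p _ => hterm p] at h
  rw [h]
  split_ifs <;> simp


section Spec

variable (n : ℕ) (A : Matrix (Fin n) (Fin n) ℂ)

noncomputable def Mp : Matrix (Fin n) (Fin n) (MvPolynomial (Fin n) ℂ) :=
  Matrix.diagonal (fun i => (X i : MvPolynomial (Fin n) ℂ)) * A.map C

lemma Mp_apply (i j : Fin n) : Mp n A i j = X i * C (A i j) := by
  rw [Mp, Matrix.mul_apply, Finset.sum_eq_single i]
  · rw [Matrix.diagonal_apply_eq, Matrix.map_apply]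
  · intro b _ hb
    rw [Matrix.diagonal_apply_ne' _ hb, zero_mul]
  · simp

lemma row_Mp (i : Fin n) : row (Mp n A) i = C (X i) * row (A.map C) i := by
  rw [row, row, Finset.mul_sum]
  apply Finset.sum_congr rfl
  intro l _
  rw [Mp_apply, map_mul, mul_assoc, Matrix.map_apply]

lemma G_Mp (α : Fin n →₀ ℕ) : G (Mp n A) α = monomial α (G A α) := by
  rw [G]
  have hPP : PP (Mp n A) α =
      C (∏ i, (X i : MvPolynomial (Fin n) ℂ) ^ α i) * PP (A.map C) α := by
    rw [PP, PP]
    simp_rw [row_Mp, mul_pow]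
    rw [Finset.prod_mul_distrib]
    congr 1
    rw [map_prod (C : MvPolynomial (Fin n) ℂ →+* _)]
    exact Finset.prod_congr rfl fun i _ => by rw [map_pow]
  rw [hPP, coeff_C_mul, ← map_PP (C : ℂ →+* MvPolynomial (Fin n) ℂ), coeff_map, monomial_eq]
  rw [Finsupp.prod_pow]
  rw [mul_comm]
  rfl

lemma coeff_H_Mp (j : ℕ) (γ : Fin n →₀ ℕ) :
    coeff γ (H j (Mp n A)) = if (∑ i, γ i) = j then G A γ else 0 := by
  rw [H, MvPolynomial.coeff_sum]
  simp_rw [G_Mp]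
  by_cases h : (∑ i, γ i) = j
  · rw [if_pos h, Finset.sum_eq_single γ]
    · rw [coeff_monomial, if_pos rfl]
    · intro b _ hb
      rw [coeff_monomial, if_neg hb]
    · intro hγ
      exfalso
      apply hγ
      rw [mem_finsuppAntidiag]
      exact ⟨h, Finset.subset_univ _⟩
  · rw [if_neg h]
    apply Finset.sum_eq_zero
    intro β hβ
    rw [coeff_monomial, if_neg]
    intro hc
    rw [mem_finsuppAntidiag] at hβ
    rw [hc] at hβ
    exact h hβ.1

noncomputable def T : MvPolynomial (Fin n) ℂ →+* PowerSeries (MvPolynomial (Fin n) ℂ) :=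
  eval₂Hom (((PowerSeries.C (R := MvPolynomial (Fin n) ℂ))).comp MvPolynomial.C)
    (fun i => PowerSeries.C (X i) * PowerSeries.X)

lemma T_monomial (α : Fin n →₀ ℕ) (c : ℂ) :
    T n (monomial α c) = PowerSeries.C (monomial α c) * PowerSeries.X ^ (∑ i, α i) := by
  rw [T, coe_eval₂Hom, eval₂_monomial, Finsupp.prod_pow]
  simp_rw [mul_pow, ← map_pow ((PowerSeries.C (R := MvPolynomial (Fin n) ℂ)))]
  rw [Finset.prod_mul_distrib, ← map_prod ((PowerSeries.C (R := MvPolynomial (Fin n) ℂ))),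
    Finset.prod_pow_eq_pow_sum, RingHom.comp_apply, ← mul_assoc, ← map_mul, monomial_eq,
    Finsupp.prod_pow]

lemma T_PD : PD (Mp n A) = T n ((1 - Mp n A).det) := by
  rw [RingHom.map_det, RingHom.mapMatrix_apply, PD]
  congr 1
  apply Matrix.ext
  intro i j
  rw [Matrix.map_apply, Matrix.sub_apply, Matrix.sub_apply, map_sub, Mp_apply, map_mul,
    Matrix.smul_apply, Matrix.map_apply, Mp_apply]
  refine congrArg₂ (fun a b => a - b) ?_ ?_
  · rw [Matrix.one_apply, Matrix.one_apply, apply_ite (T n), map_one, map_zero]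
  · rw [T, eval₂Hom_X', eval₂Hom_C, RingHom.comp_apply, smul_eq_mul, map_mul]
    ring

lemma cc_Mp (k : ℕ) (δ : Fin n →₀ ℕ) :
    coeff δ (cc k (Mp n A)) = if (∑ i, δ i) = k then coeff δ ((1 - Mp n A).det) else 0 := by
  rw [cc, T_PD]
  set D₀ := (1 - Mp n A).det with hD₀
  conv_lhs => rw [as_sum D₀]
  rw [map_sum (T n), map_sum (PowerSeries.coeff (R := MvPolynomial (Fin n) ℂ) k)]
  simp_rw [T_monomial, PowerSeries.coeff_C_mul, PowerSeries.coeff_X_pow, mul_ite, mul_one,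
    mul_zero]
  rw [MvPolynomial.coeff_sum]
  by_cases h : (∑ i, δ i) = k
  · rw [if_pos h]
    by_cases hδ : δ ∈ D₀.support
    · rw [Finset.sum_eq_single δ]
      · rw [if_pos h.symm, coeff_monomial, if_pos rfl]
      · intro β _ hβ
        split_ifs with hs
        · rw [coeff_monomial, if_neg hβ]
        · exact coeff_zero _
      · intro hc
        exact absurd hδ hc
    · rw [notMem_support_iff.1 hδ]
      apply Finset.sum_eq_zero
      intro β hβ
      have hne : β ≠ δ := fun hc => hδ (hc ▸ hβ)
      split_ifs with hs
      · rw [coeff_monomial, if_neg hne]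
      · exact coeff_zero _
  · rw [if_neg h]
    apply Finset.sum_eq_zero
    intro β _
    split_ifs with hs
    · rw [coeff_monomial, if_neg]
      intro hc
      apply h
      rw [← hc, ← hs]
    · exact coeff_zero _

end Spec

end MacMahon

open MvPolynomial in
/-- **MacMahon Master Theorem.** The coefficient of `x^α` in `∏ i ((Ax)_i)^{α_i}` equals
the coefficient of `x^α` in the power series expansion of `det(I - Δ(x)A)⁻¹`. -/
theorem macmahon_master (n : ℕ) (A : Matrix (Fin n) (Fin n) ℂ) (α : Fin n →₀ ℕ) :
    MvPolynomial.coeff α (∏ i, (∑ j, MvPolynomial.C (A i j) * MvPolynomial.X j) ^ α i) =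
      MvPowerSeries.coeff α
        (((1 - Matrix.diagonal (fun i => (MvPolynomial.X i : MvPolynomial (Fin n) ℂ)) *
              A.map MvPolynomial.C).det : MvPowerSeries (Fin n) ℂ))⁻¹ := by
  classical
  set D₀ : MvPolynomial (Fin n) ℂ :=
    (1 - Matrix.diagonal (fun i => (MvPolynomial.X i : MvPolynomial (Fin n) ℂ)) *
      A.map MvPolynomial.C).det with hD₀
  have hMp : (1 - MacMahon.Mp n A).det = D₀ := rfl
  have hconst : MvPowerSeries.constantCoeff (↑D₀ : MvPowerSeries (Fin n) ℂ) ≠ 0 := by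
    have h1 : MvPowerSeries.constantCoeff (↑D₀ : MvPowerSeries (Fin n) ℂ)
        = MvPolynomial.coeff 0 D₀ := by
      rw [← MvPowerSeries.coeff_zero_eq_constantCoeff_apply, MvPolynomial.coeff_coe]
    have h2 : MvPolynomial.coeff 0 D₀ = MvPolynomial.constantCoeff D₀ := rfl
    rw [h1, h2, ← hMp, RingHom.map_det, RingHom.mapMatrix_apply]
    have hmap : (1 - MacMahon.Mp n A).map (MvPolynomial.constantCoeff) = 1 := by
      ext i j
      rw [Matrix.map_apply, Matrix.sub_apply, map_sub, MacMahon.Mp_apply, map_mul,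
        constantCoeff_X, zero_mul, sub_zero, Matrix.one_apply, Matrix.one_apply,
        apply_ite MvPolynomial.constantCoeff, map_one, map_zero]
    rw [hmap, Matrix.det_one]
    exact one_ne_zero
  set P : MvPowerSeries (Fin n) ℂ := fun β => MacMahon.G A β with hPdef
  have hmul : P * (↑D₀ : MvPowerSeries (Fin n) ℂ) = 1 := by
    ext β
    rw [MvPowerSeries.coeff_mul, MvPowerSeries.coeff_one]
    have hkey := MacMahon.key_spec n A (∑ i, β i)
    rw [show Matrix.diagonal (fun i => (MvPolynomial.X i : MvPolynomial (Fin n) ℂ)) *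
        A.map MvPolynomial.C = MacMahon.Mp n A from rfl] at hkey
    have h2 := congrArg (MvPolynomial.coeff β) hkey
    rw [MvPolynomial.coeff_sum] at h2
    have hterm : ∀ p : ℕ × ℕ, p ∈ Finset.HasAntidiagonal.antidiagonal (∑ i, β i) →
        MvPolynomial.coeff β
            (MacMahon.H p.1 (MacMahon.Mp n A) * MacMahon.cc p.2 (MacMahon.Mp n A))
        = ∑ q ∈ Finset.HasAntidiagonal.antidiagonal β,
            (if (∑ i, q.1 i) = p.1 then MacMahon.G A q.1 else 0) *
              (if (∑ i, q.2 i) = p.2 then MvPolynomial.coeff q.2 D₀ else 0) := by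
      intro p _
      rw [MvPolynomial.coeff_mul]
      refine Finset.sum_congr rfl fun q _ => ?_
      rw [MacMahon.coeff_H_Mp, MacMahon.cc_Mp, hMp]
    rw [Finset.sum_congr rfl hterm, Finset.sum_comm] at h2
    have hcollapse : ∀ q ∈ Finset.HasAntidiagonal.antidiagonal β,
        (∑ p ∈ Finset.HasAntidiagonal.antidiagonal (∑ i, β i),
          (if (∑ i, q.1 i) = p.1 then MacMahon.G A q.1 else 0) *
            (if (∑ i, q.2 i) = p.2 then MvPolynomial.coeff q.2 D₀ else 0))
        = MacMahon.G A q.1 * MvPolynomial.coeff q.2 D₀ := by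
      intro q hq
      have hqsum : (∑ i, q.1 i) + (∑ i, q.2 i) = ∑ i, β i := by
        rw [← Finset.HasAntidiagonal.mem_antidiagonal.mp hq, ← Finset.sum_add_distrib]
        exact Finset.sum_congr rfl fun i _ => rfl
      rw [Finset.sum_eq_single ((∑ i, q.1 i), (∑ i, q.2 i))]
      · rw [if_pos rfl, if_pos rfl]
      · intro p hp hne
        rcases Decidable.em ((∑ i, q.1 i) = p.1) with h1 | h1
        · rcases Decidable.em ((∑ i, q.2 i) = p.2) with hh | hh
          · exact absurd (Prod.ext_iff.mpr ⟨h1.symm, hh.symm⟩) hne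
          · rw [if_neg hh, mul_zero]
        · rw [if_neg h1, zero_mul]
      · intro hc
        exact absurd (Finset.HasAntidiagonal.mem_antidiagonal.mpr hqsum) hc
    rw [Finset.sum_congr rfl hcollapse] at h2
    have hLeq : (∑ p ∈ Finset.HasAntidiagonal.antidiagonal β, (MvPowerSeries.coeff p.1 P) *
        MvPowerSeries.coeff p.2 (↑D₀ : MvPowerSeries (Fin n) ℂ))
        = ∑ q ∈ Finset.HasAntidiagonal.antidiagonal β, MacMahon.G A q.1 * MvPolynomial.coeff q.2 D₀ := by
      refine Finset.sum_congr rfl fun q _ => ?_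
      rw [MvPolynomial.coeff_coe]
      rfl
    rw [hLeq, h2]
    by_cases hβ : β = 0
    · rw [if_pos hβ, hβ]
      simp
    · rw [if_neg hβ]
      have hm0 : (∑ i, β i) ≠ 0 := by
        intro hc
        apply hβ
        ext i
        exact Finset.sum_eq_zero_iff.mp hc i (Finset.mem_univ i)
      rw [if_neg hm0, MvPolynomial.coeff_zero]
  have hinv : P = (↑D₀ : MvPowerSeries (Fin n) ℂ)⁻¹ :=
    (MvPowerSeries.eq_inv_iff_mul_eq_one hconst).mpr hmul
  have hLHS : MvPolynomial.coeff α
      (∏ i, (∑ j, MvPolynomial.C (A i j) * MvPolynomial.X j) ^ α i) = MacMahon.G A α := rfl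
  rw [hLHS, ← hinv, MvPowerSeries.coeff_apply]
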